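/- For λ > 0, as x → ∞, 1 - F_λ(x) = (2φ(x)/x)[1 - x^{-2} + O(x^{-4})], i.e., (1 - F_λ(x) - (2φ(x)/x)(1 - x^{-2})) / (2φ(x) x^{-5}) is bounded for large x. -/

import Mathlib

open Real MeasureTheory Filter Set

noncomputable def stdPhi (x : ℝ) : ℝ := (Real.sqrt (2 * Real.pi))⁻¹ * Real.exp (-x ^ 2 / 2)

noncomputable def stdCdf (x : ℝ) : ℝ := ∫ t in Set.Iic x, stdPhi t

noncomputable def snCdf (l x : ℝ) : ℝ := ∫ t in Set.Iic x, 2 * stdPhi t * stdCdf (l * t)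

lemma stdPhi_eq : stdPhi = fun x : ℝ => (Real.sqrt (2 * π))⁻¹ * Real.exp (-(1/2) * x ^ 2) := by
  funext x; unfold stdPhi; ring_nf

lemma stdPhi_pos (x : ℝ) : 0 < stdPhi x := by
  unfold stdPhi
  have h : 0 < Real.sqrt (2 * π) := Real.sqrt_pos.2 (by positivity)
  positivity

lemma stdPhi_nonneg (x : ℝ) : 0 ≤ stdPhi x := (stdPhi_pos x).le

lemma continuous_stdPhi : Continuous stdPhi := by
  unfold stdPhi; fun_prop

lemma stdPhi_neg (x : ℝ) : stdPhi (-x) = stdPhi x := by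
  unfold stdPhi; rw [neg_pow]; ring_nf

lemma integrable_stdPhi : Integrable stdPhi := by
  rw [stdPhi_eq]
  exact (integrable_exp_neg_mul_sq (by norm_num : (0:ℝ) < 1/2)).const_mul _

lemma integral_stdPhi : ∫ x, stdPhi x = 1 := by
  rw [stdPhi_eq]
  rw [MeasureTheory.integral_const_mul, integral_gaussian]
  have h : π / (1/2 : ℝ) = 2 * π := by ring
  rw [h]
  exact inv_mul_cancel₀ (Real.sqrt_ne_zero'.2 (by positivity))

lemma hasDerivAt_stdPhi (x : ℝ) : HasDerivAt stdPhi (-x * stdPhi x) x := by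
  have h1 : HasDerivAt (fun y : ℝ => -y ^ 2 / 2) (-x) x := by
    have := ((hasDerivAt_pow 2 x).neg).div_const 2
    exact this.congr_deriv (by norm_num; ring)
  have h2 := (h1.exp).const_mul (Real.sqrt (2 * π))⁻¹
  have : stdPhi = fun y : ℝ => (Real.sqrt (2 * π))⁻¹ * Real.exp (-y ^ 2 / 2) := rfl
  rw [this]
  refine h2.congr_deriv ?_
  show _ = -x * ((Real.sqrt (2*π))⁻¹ * Real.exp (-x^2/2))
  ring

noncomputable def MM (x : ℝ) : ℝ := ∫ t in Set.Ioi x, stdPhi t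

lemma stdCdf_add_MM (x : ℝ) : stdCdf x + MM x = 1 := by
  rw [← integral_stdPhi]
  exact intervalIntegral.integral_Iic_add_Ioi integrable_stdPhi.integrableOn integrable_stdPhi.integrableOn

lemma MM_eq (x : ℝ) : MM x = 1 - stdCdf x := by
  have := stdCdf_add_MM x; linarith

lemma stdCdf_neg (x : ℝ) : stdCdf (-x) = MM x := by
  unfold stdCdf MM
  rw [← integral_comp_neg_Ioi]
  exact setIntegral_congr_fun measurableSet_Ioi fun t _ => (stdPhi_neg t)

lemma MM_nonneg (x : ℝ) : 0 ≤ MM x :=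
  setIntegral_nonneg measurableSet_Ioi fun t _ => stdPhi_nonneg t

lemma stdCdf_nonneg (x : ℝ) : 0 ≤ stdCdf x :=
  setIntegral_nonneg measurableSet_Iic fun t _ => stdPhi_nonneg t

lemma stdCdf_le_one (x : ℝ) : stdCdf x ≤ 1 := by
  have := MM_nonneg x; have := stdCdf_add_MM x; linarith

lemma MM_le_one (x : ℝ) : MM x ≤ 1 := by
  have := stdCdf_nonneg x; have := stdCdf_add_MM x; linarith

lemma MM_antitone : Antitone MM := by
  intro a b hab
  exact setIntegral_mono_set integrable_stdPhi.integrableOn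
    (Filter.Eventually.of_forall fun t => stdPhi_nonneg t)
    (HasSubset.Subset.eventuallyLE (Set.Ioi_subset_Ioi hab))

lemma hasDerivAt_stdCdf (x : ℝ) : HasDerivAt stdCdf (stdPhi x) x := by
  have key : ∀ y : ℝ, stdCdf y = stdCdf 0 + ∫ t in (0:ℝ)..y, stdPhi t := by
    intro y
    rw [← intervalIntegral.integral_Iic_sub_Iic integrable_stdPhi.integrableOn
      integrable_stdPhi.integrableOn]
    unfold stdCdf; ring
  have h : HasDerivAt (fun y : ℝ => ∫ t in (0:ℝ)..y, stdPhi t) (stdPhi x) x :=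
    intervalIntegral.integral_hasDerivAt_right
      (integrable_stdPhi.intervalIntegrable)
      (continuous_stdPhi.stronglyMeasurableAtFilter _ _)
      continuous_stdPhi.continuousAt
  exact (h.const_add (stdCdf 0)).congr_of_eventuallyEq
    (Filter.Eventually.of_forall key)

lemma hasDerivAt_MM (x : ℝ) : HasDerivAt MM (-stdPhi x) x := by
  have h := (hasDerivAt_stdCdf x).const_sub 1
  exact h.congr_of_eventuallyEq (Filter.Eventually.of_forall MM_eq)

lemma continuous_stdCdf : Continuous stdCdf :=
  continuous_iff_continuousAt.2 fun x => (hasDerivAt_stdCdf x).continuousAt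

lemma tendsto_stdPhi : Tendsto stdPhi atTop (nhds 0) := by
  rw [stdPhi_eq]
  rw [show (0:ℝ) = (Real.sqrt (2*π))⁻¹ * 0 by ring]
  apply Tendsto.const_mul
  apply Real.tendsto_exp_atBot.comp
  have : Tendsto (fun x : ℝ => (1/2) * x ^ 2) atTop atTop :=
    (tendsto_pow_atTop (by norm_num)).const_mul_atTop (by norm_num)
  have h2 := tendsto_neg_atTop_atBot.comp this
  exact h2.congr fun x => by simp [Function.comp]

lemma integrable_mul_stdPhi : Integrable (fun t : ℝ => t * stdPhi t) := by
  rw [stdPhi_eq]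
  have := (integrable_mul_exp_neg_mul_sq (by norm_num : (0:ℝ) < 1/2)).const_mul
    (Real.sqrt (2*π))⁻¹
  exact this.congr (Filter.Eventually.of_forall fun t => by ring)

lemma integral_Ioi_mul_stdPhi (x : ℝ) : ∫ t in Set.Ioi x, t * stdPhi t = stdPhi x := by
  have h := integral_Ioi_of_hasDerivAt_of_tendsto' (f := fun t => -stdPhi t)
    (f' := fun t => t * stdPhi t) (a := x) (m := 0)
    (fun t _ => ((hasDerivAt_stdPhi t).neg).congr_deriv (by ring))
    integrable_mul_stdPhi.integrableOn (by rw [show (0:ℝ) = -0 by ring]; exact tendsto_stdPhi.neg)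
  simp only [neg_neg, zero_sub] at h
  rw [h]

lemma MM_le (x : ℝ) (hx : 0 < x) : MM x ≤ stdPhi x * x⁻¹ := by
  have h1 : MM x ≤ ∫ t in Set.Ioi x, x⁻¹ * (t * stdPhi t) := by
    apply setIntegral_mono_on integrable_stdPhi.integrableOn
      ((integrable_mul_stdPhi.integrableOn).const_mul _) measurableSet_Ioi
    intro t ht
    rw [Set.mem_Ioi] at ht
    have hxt : x ≤ t := ht.le
    have ht0 : 0 < t := hx.trans ht
    have : 1 ≤ x⁻¹ * t := by
      rw [← div_eq_inv_mul]
      exact (one_le_div hx).2 hxt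
    nlinarith [stdPhi_nonneg t]
  rw [MeasureTheory.integral_const_mul, integral_Ioi_mul_stdPhi] at h1
  linarith

lemma tendsto_MM : Tendsto MM atTop (nhds 0) := by
  have h := tendsto_stdPhi.mul tendsto_inv_atTop_zero
  rw [mul_zero] at h
  apply tendsto_of_tendsto_of_tendsto_of_le_of_le' tendsto_const_nhds h
  · exact Filter.Eventually.of_forall fun x => MM_nonneg x
  · filter_upwards [eventually_gt_atTop 0] with x hx
    exact MM_le x hx

lemma hasDerivAt_u (x : ℝ) (hx : x ≠ 0) :
    HasDerivAt (fun y : ℝ => MM y - stdPhi y * (y⁻¹ - (y⁻¹) ^ 3))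
      (-(3 * stdPhi x * (x⁻¹) ^ 4)) x := by
  have hinv := hasDerivAt_inv hx
  have h3 := hinv.pow 3
  have hd := (hasDerivAt_stdPhi x).mul (hinv.sub h3)
  have h := (hasDerivAt_MM x).sub hd
  refine h.congr_deriv ?_
  simp only [Pi.sub_apply, Pi.pow_apply]
  field_simp
  ring_nf
  field_simp

lemma integrableOn_phi_inv4 (x : ℝ) (hx : 0 < x) :
    IntegrableOn (fun t : ℝ => -(3 * stdPhi t * (t⁻¹) ^ 4)) (Set.Ioi x) := by
  apply Integrable.mono' ((integrable_stdPhi.integrableOn).const_mul (3 * x⁻¹ ^ 4))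
  · exact (((continuous_stdPhi.measurable.const_mul 3).mul
      (measurable_inv.pow_const 4)).neg).aestronglyMeasurable
  · rw [ae_restrict_iff' measurableSet_Ioi]
    apply Filter.Eventually.of_forall
    intro t ht
    rw [Set.mem_Ioi] at ht
    have ht0 : 0 < t := hx.trans ht
    have h1 : t⁻¹ ≤ x⁻¹ := inv_anti₀ hx ht.le
    have h2 : (t⁻¹) ^ 4 ≤ (x⁻¹) ^ 4 := pow_le_pow_left₀ (by positivity) h1 4
    rw [norm_neg, norm_mul, norm_mul]
    simp only [Real.norm_eq_abs, abs_of_nonneg (stdPhi_nonneg t), abs_of_nonneg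
      (by positivity : (0:ℝ) ≤ (t⁻¹)^4), abs_of_nonneg (by norm_num : (0:ℝ) ≤ 3)]
    nlinarith [stdPhi_nonneg t]

lemma mills_integral (x : ℝ) (hx : 0 < x) :
    MM x - stdPhi x * (x⁻¹ - (x⁻¹) ^ 3) = ∫ t in Set.Ioi x, 3 * stdPhi t * (t⁻¹) ^ 4 := by
  have htend : Tendsto (fun y : ℝ => MM y - stdPhi y * (y⁻¹ - (y⁻¹) ^ 3)) atTop (nhds 0) := by
    have h := tendsto_MM.sub
      (tendsto_stdPhi.mul (tendsto_inv_atTop_zero.sub (tendsto_inv_atTop_zero.pow 3)))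
    simpa using h
  have key := integral_Ioi_of_hasDerivAt_of_tendsto'
    (f := fun y : ℝ => MM y - stdPhi y * (y⁻¹ - (y⁻¹) ^ 3))
    (f' := fun t : ℝ => -(3 * stdPhi t * (t⁻¹) ^ 4)) (a := x) (m := 0)
    (fun t ht => hasDerivAt_u t (lt_of_lt_of_le hx ht).ne')
    (integrableOn_phi_inv4 x hx) htend
  rw [MeasureTheory.integral_neg] at key
  linarith [key]

lemma mills (x : ℝ) (hx : 0 < x) :
    |MM x - stdPhi x * (x⁻¹ - (x⁻¹) ^ 3)| ≤ 3 * stdPhi x * (x⁻¹) ^ 5 := by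
  rw [mills_integral x hx]
  have hnn : 0 ≤ ∫ t in Set.Ioi x, 3 * stdPhi t * (t⁻¹) ^ 4 :=
    setIntegral_nonneg measurableSet_Ioi fun t _ =>
      mul_nonneg (mul_nonneg (by norm_num) (stdPhi_nonneg t)) (by positivity)
  rw [abs_of_nonneg hnn]
  have h1 : ∫ t in Set.Ioi x, 3 * stdPhi t * (t⁻¹) ^ 4
      ≤ ∫ t in Set.Ioi x, (3 * (x⁻¹) ^ 5) * (t * stdPhi t) := by
    apply setIntegral_mono_on
    · exact (integrableOn_phi_inv4 x hx).neg.congr (Filter.Eventually.of_forall fun t => by simp)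
    · exact (integrable_mul_stdPhi.integrableOn).const_mul _
    · exact measurableSet_Ioi
    intro t ht
    rw [Set.mem_Ioi] at ht
    have ht0 : 0 < t := hx.trans ht
    have h5 : (t⁻¹) ^ 5 ≤ (x⁻¹) ^ 5 := pow_le_pow_left₀ (by positivity)
      (inv_anti₀ hx ht.le) 5
    have heq : (t⁻¹) ^ 4 = t * (t⁻¹) ^ 5 := by field_simp
    rw [heq]
    have hkey : stdPhi t * (t⁻¹) ^ 5 ≤ stdPhi t * (x⁻¹) ^ 5 :=
      mul_le_mul_of_nonneg_left h5 (stdPhi_nonneg t)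
    calc 3 * stdPhi t * (t * (t⁻¹) ^ 5) = (3 * t) * (stdPhi t * (t⁻¹) ^ 5) := by ring
      _ ≤ (3 * t) * (stdPhi t * (x⁻¹) ^ 5) :=
          mul_le_mul_of_nonneg_left hkey (by linarith)
      _ = (3 * (x⁻¹) ^ 5) * (t * stdPhi t) := by ring
  rw [MeasureTheory.integral_const_mul, integral_Ioi_mul_stdPhi] at h1
  linarith

lemma MM_zero : MM 0 = 1/2 := by
  have h1 := stdCdf_add_MM 0
  have h2 := stdCdf_neg 0
  rw [neg_zero] at h2
  linarith

lemma continuous_g (l : ℝ) : Continuous (fun t : ℝ => 2 * stdPhi t * stdCdf (l * t)) := by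
  exact (continuous_const.mul continuous_stdPhi).mul
    (continuous_stdCdf.comp (continuous_const.mul continuous_id))

lemma integrable_g (l : ℝ) : Integrable (fun t : ℝ => 2 * stdPhi t * stdCdf (l * t)) := by
  apply Integrable.mono' (integrable_stdPhi.const_mul 2)
    (continuous_g l).aestronglyMeasurable
  apply Filter.Eventually.of_forall
  intro t
  rw [Real.norm_eq_abs, abs_of_nonneg (by
    exact mul_nonneg (mul_nonneg (by norm_num) (stdPhi_nonneg t)) (stdCdf_nonneg _))]
  nlinarith [stdPhi_nonneg t, stdCdf_le_one (l * t), stdCdf_nonneg (l * t)]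

lemma integrable_gtilde (l : ℝ) : Integrable (fun t : ℝ => 2 * stdPhi t * MM (l * t)) := by
  have hc : Continuous (fun t : ℝ => 2 * stdPhi t * MM (l * t)) := by
    have : Continuous MM := by
      have : MM = fun y => 1 - stdCdf y := funext MM_eq
      rw [this]; exact continuous_const.sub continuous_stdCdf
    exact (continuous_const.mul continuous_stdPhi).mul
      (this.comp (continuous_const.mul continuous_id))
  apply Integrable.mono' (integrable_stdPhi.const_mul 2) hc.aestronglyMeasurable
  apply Filter.Eventually.of_forall
  intro t
  rw [Real.norm_eq_abs, abs_of_nonneg (by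
    exact mul_nonneg (mul_nonneg (by norm_num) (stdPhi_nonneg t)) (MM_nonneg _))]
  nlinarith [stdPhi_nonneg t, MM_le_one (l * t), MM_nonneg (l * t)]

lemma integral_g (l : ℝ) : ∫ t : ℝ, 2 * stdPhi t * stdCdf (l * t) = 1 := by
  have hsplit := intervalIntegral.integral_Iic_add_Ioi (b := (0:ℝ)) (μ := volume)
    (integrable_g l).integrableOn (integrable_g l).integrableOn
  have hneg : (∫ t in Set.Iic (0:ℝ), 2 * stdPhi t * stdCdf (l * t))
      = ∫ t in Set.Ioi (0:ℝ), 2 * stdPhi t * MM (l * t) := by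
    have h := integral_comp_neg_Ioi (0:ℝ) (fun t => 2 * stdPhi t * stdCdf (l * t))
    rw [neg_zero] at h
    rw [← h]
    apply setIntegral_congr_fun measurableSet_Ioi
    intro t _
    simp only [stdPhi_neg, mul_neg]
    rw [stdCdf_neg]
  have hsum : (∫ t in Set.Ioi (0:ℝ), 2 * stdPhi t * MM (l * t))
      + (∫ t in Set.Ioi (0:ℝ), 2 * stdPhi t * stdCdf (l * t))
      = ∫ t in Set.Ioi (0:ℝ), 2 * stdPhi t := by
    rw [← MeasureTheory.integral_add (integrable_gtilde l).integrableOn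
      (integrable_g l).integrableOn]
    apply setIntegral_congr_fun measurableSet_Ioi
    intro t _
    have := stdCdf_add_MM (l * t)
    show 2 * stdPhi t * MM (l * t) + 2 * stdPhi t * stdCdf (l * t) = 2 * stdPhi t
    linear_combination 2 * stdPhi t * this
  have h2phi : ∫ t in Set.Ioi (0:ℝ), 2 * stdPhi t = 1 := by
    rw [MeasureTheory.integral_const_mul]
    have : (∫ t in Set.Ioi (0:ℝ), stdPhi t) = MM 0 := rfl
    rw [this, MM_zero]; norm_num
  rw [← hsplit, hneg]
  linarith [hsum, h2phi]

lemma one_sub_snCdf (l x : ℝ) :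
    1 - snCdf l x = ∫ t in Set.Ioi x, 2 * stdPhi t * stdCdf (l * t) := by
  have hsplit := intervalIntegral.integral_Iic_add_Ioi (b := x) (μ := volume)
    (integrable_g l).integrableOn (integrable_g l).integrableOn
  rw [integral_g l] at hsplit
  unfold snCdf
  linarith

lemma tail_split (l x : ℝ) :
    (∫ t in Set.Ioi x, 2 * stdPhi t * stdCdf (l * t))
      = 2 * MM x - ∫ t in Set.Ioi x, 2 * stdPhi t * MM (l * t) := by
  have h1 : (∫ t in Set.Ioi x, 2 * stdPhi t * stdCdf (l * t))
      = ∫ t in Set.Ioi x, (2 * stdPhi t - 2 * stdPhi t * MM (l * t)) := by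
    apply setIntegral_congr_fun measurableSet_Ioi
    intro t _
    have := stdCdf_add_MM (l * t)
    show 2 * stdPhi t * stdCdf (l * t) = 2 * stdPhi t - 2 * stdPhi t * MM (l * t)
    linear_combination 2 * stdPhi t * this
  rw [h1, MeasureTheory.integral_sub ((integrable_stdPhi.const_mul 2).integrableOn)
    (integrable_gtilde l).integrableOn]
  rw [MeasureTheory.integral_const_mul]
  rfl

lemma R_nonneg (l x : ℝ) : 0 ≤ ∫ t in Set.Ioi x, 2 * stdPhi t * MM (l * t) :=
  setIntegral_nonneg measurableSet_Ioi fun t _ =>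
    mul_nonneg (mul_nonneg (by norm_num) (stdPhi_nonneg t)) (MM_nonneg _)

lemma R_le (l x : ℝ) (hl : 0 < l) :
    (∫ t in Set.Ioi x, 2 * stdPhi t * MM (l * t)) ≤ 2 * MM (l * x) * MM x := by
  have h1 : (∫ t in Set.Ioi x, 2 * stdPhi t * MM (l * t))
      ≤ ∫ t in Set.Ioi x, (2 * MM (l * x)) * stdPhi t := by
    apply setIntegral_mono_on (integrable_gtilde l).integrableOn
      ((integrable_stdPhi.integrableOn).const_mul _) measurableSet_Ioi
    intro t ht
    rw [Set.mem_Ioi] at ht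
    have hmono : MM (l * t) ≤ MM (l * x) :=
      MM_antitone (mul_le_mul_of_nonneg_left ht.le hl.le)
    have := mul_le_mul_of_nonneg_left hmono (mul_nonneg (by norm_num : (0:ℝ) ≤ 2) (stdPhi_nonneg t))
    calc 2 * stdPhi t * MM (l * t) = (2 * stdPhi t) * MM (l * t) := by ring
      _ ≤ (2 * stdPhi t) * MM (l * x) := this
      _ = (2 * MM (l * x)) * stdPhi t := by ring
  rw [MeasureTheory.integral_const_mul] at h1
  have : (∫ t in Set.Ioi x, stdPhi t) = MM x := rfl
  rw [this] at h1
  linarith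

lemma tendsto_cube (b : ℝ) (hb : 0 < b) :
    Tendsto (fun x : ℝ => x ^ 3 * Real.exp (-(b * x))) atTop (nhds 0) := by
  have h0 := tendsto_pow_mul_exp_neg_atTop_nhds_zero 3
  have hb' : Tendsto (fun x : ℝ => b * x) atTop atTop :=
    tendsto_id.const_mul_atTop hb
  have h1 := (h0.comp hb').const_mul ((b ^ 3)⁻¹)
  rw [mul_zero] at h1
  refine h1.congr fun x => ?_
  simp only [Function.comp]
  field_simp

theorem stmt_5 (l : ℝ) (hl : 0 < l) :
    (fun x : ℝ => 1 - snCdf l x - (2 * stdPhi x / x) * (1 - x⁻¹ ^ 2)) =O[atTop]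
      (fun x : ℝ => 2 * stdPhi x * x⁻¹ ^ 5) := by
  rw [Asymptotics.isBigO_iff]
  use 4
  have hb : (0:ℝ) < l ^ 2 / 2 := by positivity
  have hcube := tendsto_cube (l ^ 2 / 2) hb
  have hsqrt : (0:ℝ) < Real.sqrt (2 * π) := Real.sqrt_pos.2 (by positivity)
  have hev : ∀ᶠ x in atTop, x ^ 3 * Real.exp (-(l ^ 2 / 2 * x)) ≤ l * Real.sqrt (2 * π) :=
    hcube.eventually_le_const (by positivity)
  filter_upwards [eventually_ge_atTop 1, hev] with x hx1 hsm
  have hx0 : (0:ℝ) < x := lt_of_lt_of_le one_pos hx1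
  have hre : 1 - snCdf l x - 2 * stdPhi x / x * (1 - x⁻¹ ^ 2)
      = 2 * (MM x - stdPhi x * (x⁻¹ - x⁻¹ ^ 3))
        - ∫ t in Set.Ioi x, 2 * stdPhi t * MM (l * t) := by
    rw [one_sub_snCdf, tail_split]
    ring
  rw [hre]
  set R := ∫ t in Set.Ioi x, 2 * stdPhi t * MM (l * t) with hRdef
  have hR0 : 0 ≤ R := R_nonneg l x
  have hMx : MM x ≤ stdPhi x * x⁻¹ := MM_le x hx0
  have hMlx : MM (l * x) ≤ stdPhi (l * x) * (l * x)⁻¹ := MM_le _ (mul_pos hl hx0)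
  have hphi_lx : stdPhi (l * x) * x ^ 3 ≤ l := by
    have h1 : stdPhi (l * x) ≤ (Real.sqrt (2 * π))⁻¹ * Real.exp (-(l ^ 2 / 2 * x)) := by
      unfold stdPhi
      apply mul_le_mul_of_nonneg_left _ (inv_nonneg.2 hsqrt.le)
      apply Real.exp_le_exp.2
      nlinarith [sq_nonneg l, sq_nonneg (x - 1)]
    calc stdPhi (l * x) * x ^ 3
        ≤ ((Real.sqrt (2 * π))⁻¹ * Real.exp (-(l ^ 2 / 2 * x))) * x ^ 3 :=
          mul_le_mul_of_nonneg_right h1 (by positivity)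
      _ = (Real.sqrt (2 * π))⁻¹ * (x ^ 3 * Real.exp (-(l ^ 2 / 2 * x))) := by ring
      _ ≤ (Real.sqrt (2 * π))⁻¹ * (l * Real.sqrt (2 * π)) :=
          mul_le_mul_of_nonneg_left hsm (by positivity)
      _ = l := by field_simp
  have hBl : stdPhi (l * x) * l⁻¹ * x⁻¹ ^ 2 ≤ x⁻¹ ^ 5 := by
    rw [← sub_nonneg]
    have heq : x⁻¹ ^ 5 - stdPhi (l * x) * l⁻¹ * x⁻¹ ^ 2
        = (l - stdPhi (l * x) * x ^ 3) * (l⁻¹ * x⁻¹ ^ 5) := by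
      field_simp
    rw [heq]
    exact mul_nonneg (by linarith) (by positivity)
  have hRfinal : R ≤ 2 * stdPhi x * x⁻¹ ^ 5 := by
    have hstep := mul_le_mul hMlx hMx (MM_nonneg x)
      (mul_nonneg (stdPhi_nonneg _) (by positivity))
    have h2 : R ≤ 2 * (stdPhi (l * x) * (l * x)⁻¹ * (stdPhi x * x⁻¹)) := by
      have := R_le l x hl
      nlinarith [MM_nonneg (l * x), MM_nonneg x]
    calc R ≤ 2 * (stdPhi (l * x) * (l * x)⁻¹ * (stdPhi x * x⁻¹)) := h2
      _ = (2 * stdPhi x) * (stdPhi (l * x) * l⁻¹ * x⁻¹ ^ 2) := by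
          rw [mul_inv]; ring
      _ ≤ (2 * stdPhi x) * x⁻¹ ^ 5 :=
          mul_le_mul_of_nonneg_left hBl (mul_nonneg (by norm_num) (stdPhi_nonneg x))
      _ = 2 * stdPhi x * x⁻¹ ^ 5 := by ring
  have hmills := mills x hx0
  have hRHS : (0:ℝ) ≤ 2 * stdPhi x * x⁻¹ ^ 5 :=
    mul_nonneg (mul_nonneg (by norm_num) (stdPhi_nonneg x)) (by positivity)
  rw [Real.norm_eq_abs, Real.norm_eq_abs, abs_of_nonneg hRHS]
  have habs : |2 * (MM x - stdPhi x * (x⁻¹ - x⁻¹ ^ 3)) - R|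
      ≤ 2 * |MM x - stdPhi x * (x⁻¹ - x⁻¹ ^ 3)| + |R| := by
    calc |2 * (MM x - stdPhi x * (x⁻¹ - x⁻¹ ^ 3)) - R|
        ≤ |2 * (MM x - stdPhi x * (x⁻¹ - x⁻¹ ^ 3))| + |R| := abs_sub _ _
      _ = 2 * |MM x - stdPhi x * (x⁻¹ - x⁻¹ ^ 3)| + |R| := by
          rw [abs_mul, abs_of_nonneg (by norm_num : (0:ℝ) ≤ 2)]
  rw [abs_of_nonneg hR0] at habs
  linarith
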